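/- Let K ∈ ℝ and p_i, p_j ∈ ℝ^n with 1 + K(p_i·p_i) ≠ 0. Define k_{ij} = ((1 + K(p_i·p_j))/(1 + K(p_i·p_i))) p_i - p_j and T_{p_i} = I + K(p_i p_iᵀ). Then the row vector k_{ij} multiplied by T_{p_i} equals p_i - p_j, i.e., T_{p_i}ᵀ k_{ij} = p_i - p_j (T_{p_i} is symmetric). -/

import Mathlib

open scoped BigOperators

noncomputable section

/-- Standard Euclidean dot product on `ℝ^m`. -/
def dot {m : ℕ} (x y : Fin m → ℝ) : ℝ := ∑ i, x i * y i

/-- The matrix `T_p = I + K (p pᵀ)`. -/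
def Tmat {n : ℕ} (K : ℝ) (p : Fin n → ℝ) : Matrix (Fin n) (Fin n) ℝ :=
  1 + K • Matrix.vecMulVec p p

/-- The rigidity-matrix row entry
`k_{ij} = ((1 + K (p_i·p_j))/(1 + K (p_i·p_i))) p_i - p_j`. -/
def kRow {n : ℕ} (K : ℝ) (p_i p_j : Fin n → ℝ) : Fin n → ℝ :=
  ((1 + K * dot p_i p_j) / (1 + K * dot p_i p_i)) • p_i - p_j

theorem kRow_mul_Tmat (n : ℕ) (K : ℝ) (p_i p_j : Fin n → ℝ)
    (h : 1 + K * dot p_i p_i ≠ 0) :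
    Matrix.vecMul (kRow K p_i p_j) (Tmat K p_i) = p_i - p_j ∧
      Matrix.transpose (Tmat K p_i) = Tmat K p_i := by
  constructor
  · funext k
    simp only [Matrix.vecMul, dotProduct, Tmat, kRow, Matrix.add_apply,
      Matrix.one_apply, Matrix.smul_apply, Matrix.vecMulVec_apply, Pi.sub_apply,
      Pi.smul_apply, smul_eq_mul, mul_add, Finset.sum_add_distrib, mul_ite,
      mul_one, mul_zero, Finset.sum_ite_eq', Finset.mem_univ, if_true]
    have hs : ∀ l : Fin n,
        (((1 + K * dot p_i p_j) / (1 + K * dot p_i p_i)) * p_i l - p_j l) * (K * (p_i l * p_i k))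
        = (K * p_i k) * (((1 + K * dot p_i p_j) / (1 + K * dot p_i p_i)) * (p_i l * p_i l) - p_j l * p_i l) := by
      intro l; ring
    rw [Finset.sum_congr rfl fun l _ => hs l, ← Finset.mul_sum, Finset.sum_sub_distrib,
      ← Finset.mul_sum]
    have hd1 : ∑ l, p_i l * p_i l = dot p_i p_i := rfl
    have hd2 : ∑ l, p_j l * p_i l = dot p_i p_j := by
      simp [dot, mul_comm]
    rw [hd1, hd2]
    field_simp
    ring
  · funext a b
    simp only [Matrix.transpose_apply, Tmat, Matrix.add_apply, Matrix.one_apply,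
      Matrix.smul_apply, Matrix.vecMulVec_apply, smul_eq_mul]
    by_cases hab : a = b <;> simp [hab, mul_comm, Ne.symm]

end
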